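/- Let G be a second countable locally compact Hausdorff principal groupoid with left Haar system, and z ∈ G⁰. Then the following are equivalent: (1) the orbit [z] is not locally closed; (2) for every k ≥ 1, the constant sequence {z,z,...} converges k-times in G⁰/G to z; (3) for every open neighborhood V of z in G⁰, λ_z(r⁻¹(V)) = ∞; (4) for every open neighborhood V of z in G⁰, r⁻¹(V) ∩ s⁻¹({z}) is not relatively compact. -/

import Mathlib

open MeasureTheory Filter Topology ENNReal Classical

/-- A topological groupoid, given by range/source maps, a (total) partial-multiplication
`mul` (only meaningful on composable pairs, i.e. when `s γ = r α`) and inversion. -/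
structure TopGroupoid (G : Type*) [TopologicalSpace G] where
  r : G → G
  s : G → G
  mul : G → G → G
  inv : G → G
  r_mul : ∀ γ α, s γ = r α → r (mul γ α) = r γ
  s_mul : ∀ γ α, s γ = r α → s (mul γ α) = s α
  mul_assoc' : ∀ γ α β, s γ = r α → s α = r β → mul (mul γ α) β = mul γ (mul α β)
  r_inv : ∀ γ, r (inv γ) = s γ
  s_inv : ∀ γ, s (inv γ) = r γ
  inv_inv' : ∀ γ, inv (inv γ) = γ
  mul_inv' : ∀ γ, mul γ (inv γ) = r γ
  inv_mul' : ∀ γ, mul (inv γ) γ = s γ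
  unit_mul : ∀ γ, mul (r γ) γ = γ
  mul_unit : ∀ γ, mul γ (s γ) = γ
  continuous_r : Continuous r
  continuous_s : Continuous s
  continuous_inv : Continuous inv
  continuous_mul : ContinuousOn (fun p : G × G => mul p.1 p.2) {p | s p.1 = r p.2}

namespace TopGroupoid

variable {G : Type*} [TopologicalSpace G] (Gd : TopGroupoid G)

/-- The unit space `G⁰` of the groupoid. -/
def units : Set G := Set.range Gd.r

/-- The orbit `[z] = r(s⁻¹{z})` of a unit `z`. -/
def orbit (z : G) : Set G := Gd.r '' (Gd.s ⁻¹' {z})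

/-- A groupoid is principal if `γ ↦ (r γ, s γ)` is injective. -/
def Principal : Prop := Function.Injective (fun γ => (Gd.r γ, Gd.s γ))

/-- Product of two subsets of the groupoid: all products of composable pairs. -/
def setMul (A B : Set G) : Set G :=
  {x | ∃ γ ∈ A, ∃ α ∈ B, Gd.s γ = Gd.r α ∧ x = Gd.mul γ α}

/-- Powers of a subset with respect to `setMul`; `A ^ 1 = A`. -/
def setPow (A : Set G) : ℕ → Set G
  | 0 => Gd.units
  | n+1 => Gd.setMul A (setPow A n)

/-- A set `W ⊆ G` is conditionally compact if `WV` and `VW` are relatively compact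
for every compact `V ⊆ G`. -/
def CondCompact (W : Set G) : Prop :=
  ∀ V : Set G, IsCompact V →
    IsCompact (closure (Gd.setMul W V)) ∧ IsCompact (closure (Gd.setMul V W))

/-- A sequence `x : ℕ → G` (in the unit space) converges `k`-times in `G⁰/G` to `z`. -/
def ConvergesKTimes (x : ℕ → G) (z : G) (k : ℕ) : Prop :=
  ∃ γ : Fin k → ℕ → G,
    (∀ i n, Gd.s (γ i n) = x n) ∧
    (∀ i, Tendsto (fun n => Gd.r (γ i n)) atTop (𝓝 z)) ∧
    (∀ i j : Fin k, i < j →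
      Tendsto (fun n => Gd.mul (γ j n) (Gd.inv (γ i n))) atTop (cocompact G))

end TopGroupoid

/-- A left Haar system on a topological groupoid: a family of Radon measures `λˣ`
with support `r⁻¹{x}`, continuous in `x`, and left invariant. -/
structure HaarSystem {G : Type*} [TopologicalSpace G] [MeasurableSpace G]
    (Gd : TopGroupoid G) where
  lam : G → Measure G
  regular : ∀ x, (lam x).Regular
  supp_subset : ∀ x ∈ Gd.units, lam x {γ | Gd.r γ ≠ x} = 0
  supp_full : ∀ x ∈ Gd.units, ∀ U : Set G, IsOpen U →
      (U ∩ Gd.r ⁻¹' {x}).Nonempty → 0 < lam x U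
  continuous_int : ∀ f : G → ℝ, Continuous f → HasCompactSupport f →
      Continuous fun x => ∫ γ, f γ ∂(lam x)
  left_invariant : ∀ γ : G, ∀ f : G → ℝ, Continuous f → HasCompactSupport f →
      ∫ α, f (Gd.mul γ α) ∂(lam (Gd.s γ)) = ∫ α, f α ∂(lam (Gd.r γ))

namespace HaarSystem

variable {G : Type*} [TopologicalSpace G] [MeasurableSpace G]
  {Gd : TopGroupoid G} (HS : HaarSystem Gd)

/-- The associated right Haar system `λ_x(E) = λˣ(E⁻¹)`, supported on `s⁻¹{x}`. -/
noncomputable def rlam (x : G) : Measure G := (HS.lam x).map Gd.inv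

/-- The groupoid (with its Haar system) is integrable if
`sup_{x ∈ N} λˣ(s⁻¹ N) < ∞` for every compact `N ⊆ G⁰`. -/
def Integrable : Prop :=
  ∀ N : Set G, N ⊆ Gd.units → IsCompact N →
    (⨆ x ∈ N, HS.lam x (Gd.s ⁻¹' N)) < ⊤

/-- `G` fails to be integrable at `z` if `sup_{x ∈ U} λˣ(s⁻¹ U) = ∞` for every open
neighborhood `U` of `z` in `G⁰`. -/
def FailsIntegrableAt (z : G) : Prop :=
  ∀ U : Set G, IsOpen U → z ∈ U →
    (⨆ x ∈ U ∩ Gd.units, HS.lam x (Gd.s ⁻¹' (U ∩ Gd.units))) = ⊤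

end HaarSystem


section AuxLemmas
variable {G : Type*} [TopologicalSpace G]

namespace TopGroupoid
variable {Gd : TopGroupoid G}


lemma r_r (γ : G) : Gd.r (Gd.r γ) = Gd.r γ := by
  have h := Gd.r_mul γ (Gd.inv γ) (Gd.r_inv γ).symm
  rwa [Gd.mul_inv'] at h

lemma s_r (γ : G) : Gd.s (Gd.r γ) = Gd.r γ := by
  have h := Gd.s_mul γ (Gd.inv γ) (Gd.r_inv γ).symm
  rw [Gd.mul_inv', Gd.s_inv] at h
  exact h

lemma s_mem_units (γ : G) : Gd.s γ ∈ Gd.units := ⟨Gd.inv γ, Gd.r_inv γ⟩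

lemma r_mem_units (γ : G) : Gd.r γ ∈ Gd.units := ⟨γ, rfl⟩

lemma unit_r {z : G} (hz : z ∈ Gd.units) : Gd.r z = z := by
  obtain ⟨w, rfl⟩ := hz; exact r_r w

lemma unit_s {z : G} (hz : z ∈ Gd.units) : Gd.s z = z := by
  obtain ⟨w, rfl⟩ := hz; exact s_r w

lemma r_s (γ : G) : Gd.r (Gd.s γ) = Gd.s γ := unit_r (s_mem_units γ)

lemma s_s (γ : G) : Gd.s (Gd.s γ) = Gd.s γ := unit_s (s_mem_units γ)

lemma mul_inv_cancel_right {γ α : G} (h : Gd.s γ = Gd.r α) :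
    Gd.mul (Gd.mul γ α) (Gd.inv α) = γ := by
  rw [Gd.mul_assoc' γ α (Gd.inv α) h (Gd.r_inv α).symm, Gd.mul_inv', ← h, Gd.mul_unit]

lemma inv_mul_cancel_left {β α : G} (h : Gd.s β = Gd.r α) :
    Gd.mul (Gd.inv β) (Gd.mul β α) = α := by
  rw [← Gd.mul_assoc' (Gd.inv β) β α (Gd.s_inv β) h, Gd.inv_mul', h, Gd.unit_mul]

lemma eq_inv_of_mul_eq {x y : G} (hc : Gd.s x = Gd.r y) (h : Gd.mul x y = Gd.r x) :
    y = Gd.inv x := by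
  have h1 : y = Gd.mul (Gd.s x) y := by
    conv_lhs => rw [← Gd.unit_mul y, ← hc]
  calc y = Gd.mul (Gd.s x) y := h1
    _ = Gd.mul (Gd.mul (Gd.inv x) x) y := by rw [Gd.inv_mul']
    _ = Gd.mul (Gd.inv x) (Gd.mul x y) := Gd.mul_assoc' _ _ _ (Gd.s_inv x) hc
    _ = Gd.mul (Gd.inv x) (Gd.r x) := by rw [h]
    _ = Gd.inv x := by rw [← Gd.s_inv x, Gd.mul_unit]

lemma inv_mul_rev {γ α : G} (h : Gd.s γ = Gd.r α) :
    Gd.inv (Gd.mul γ α) = Gd.mul (Gd.inv α) (Gd.inv γ) := by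
  have hc : Gd.s (Gd.mul γ α) = Gd.r (Gd.mul (Gd.inv α) (Gd.inv γ)) := by
    rw [Gd.s_mul _ _ h, Gd.r_mul _ _ (by rw [Gd.s_inv, Gd.r_inv]; exact h.symm), Gd.r_inv]
  have hm : Gd.mul (Gd.mul γ α) (Gd.mul (Gd.inv α) (Gd.inv γ)) = Gd.r (Gd.mul γ α) := by
    rw [Gd.mul_assoc' γ α _ h (by rw [Gd.r_mul _ _ (by rw [Gd.s_inv, Gd.r_inv]; exact h.symm), Gd.r_inv]),
      ← Gd.mul_assoc' α (Gd.inv α) (Gd.inv γ) (Gd.r_inv α).symm (by rw [Gd.s_inv, Gd.r_inv, h]),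
      Gd.mul_inv', ← h, ← Gd.r_inv γ, Gd.unit_mul, Gd.mul_inv', Gd.r_mul _ _ h]
  exact (eq_inv_of_mul_eq hc hm).symm

lemma isClosed_units [T2Space G] : IsClosed Gd.units := by
  have : Gd.units = {γ | Gd.r γ = γ} := by
    ext γ
    constructor
    · intro h; exact unit_r h
    · intro h; exact ⟨γ, h⟩
  rw [this]
  exact isClosed_eq Gd.continuous_r continuous_id

lemma orbit_subset_units (z : G) : Gd.orbit z ⊆ Gd.units := by
  rintro x ⟨γ, _, rfl⟩; exact r_mem_units γ

lemma mem_orbit_self {z : G} (hz : z ∈ Gd.units) : z ∈ Gd.orbit z :=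
  ⟨z, by simp [Set.mem_preimage, unit_s hz], unit_r hz⟩

lemma r_preimage_inter_units (V : Set G) : Gd.r ⁻¹' (V ∩ Gd.units) = Gd.r ⁻¹' V := by
  ext γ; simp [Set.mem_preimage, r_mem_units γ, Set.mem_inter_iff]

lemma s_preimage_inter_units (V : Set G) : Gd.s ⁻¹' (V ∩ Gd.units) = Gd.s ⁻¹' V := by
  ext γ; simp [Set.mem_preimage, s_mem_units γ, Set.mem_inter_iff]

lemma mem_setMul {A B : Set G} {γ α : G} (hγ : γ ∈ A) (hα : α ∈ B)
    (h : Gd.s γ = Gd.r α) : Gd.mul γ α ∈ Gd.setMul A B :=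
  ⟨γ, hγ, α, hα, h, rfl⟩

lemma isCompact_setMul [T2Space G] {A B : Set G} (hA : IsCompact A) (hB : IsCompact B) :
    IsCompact (Gd.setMul A B) := by
  have hcl : IsClosed {p : G × G | Gd.s p.1 = Gd.r p.2} :=
    isClosed_eq (Gd.continuous_s.comp continuous_fst) (Gd.continuous_r.comp continuous_snd)
  have hK : IsCompact ((A ×ˢ B) ∩ {p : G × G | Gd.s p.1 = Gd.r p.2}) :=
    (hA.prod hB).inter_right hcl
  have himg : Gd.setMul A B =
      (fun p : G × G => Gd.mul p.1 p.2) '' ((A ×ˢ B) ∩ {p : G × G | Gd.s p.1 = Gd.r p.2}) := by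
    ext x
    constructor
    · rintro ⟨γ, hγ, α, hα, hc, rfl⟩
      exact ⟨(γ, α), ⟨⟨hγ, hα⟩, hc⟩, rfl⟩
    · rintro ⟨⟨γ, α⟩, ⟨⟨hγ, hα⟩, hc⟩, rfl⟩
      exact ⟨γ, hγ, α, hα, hc, rfl⟩
  rw [himg]
  exact hK.image_of_continuousOn (Gd.continuous_mul.mono Set.inter_subset_right)

lemma isCompact_inv_image [T2Space G] {A : Set G} (hA : IsCompact A) :
    IsCompact (Gd.inv '' A) := hA.image Gd.continuous_inv


end TopGroupoid

open TopGroupoid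

section Escape
variable [T2Space G] [LocallyCompactSpace G] [SecondCountableTopology G]

/-- In a non-relatively-compact set one can find a point outside any compact set. -/
lemma exists_mem_notMem_compact {A C : Set G} (hA : ¬ IsCompact (closure A))
    (hC : IsCompact C) : ∃ a ∈ A, a ∉ C := by
  by_contra h
  push_neg at h
  have hsub : closure A ⊆ C := closure_minimal h hC.isClosed
  exact hA (hC.of_isClosed_subset isClosed_closure hsub)


lemma exists_greedy_seq (Gd : TopGroupoid G) {A : Set G} (hA : ¬ IsCompact (closure A))
    {C : Set G} (hC : IsCompact C) :
    ∃ e : ℕ → G, (∀ n, e n ∈ A) ∧ ∀ m n, m < n → e n ∉ Gd.setMul C {e m} := by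
  apply exists_seq_of_forall_finset_exists (· ∈ A) (fun a b => b ∉ Gd.setMul C {a})
  intro t _
  have hcpt : IsCompact (⋃ x ∈ (t : Set G), Gd.setMul C {x}) :=
    (t : Set G).toFinite.isCompact_biUnion
      (fun x _ => TopGroupoid.isCompact_setMul hC isCompact_singleton)
  obtain ⟨a, ha, hna⟩ := exists_mem_notMem_compact hA hcpt
  exact ⟨a, ha, fun x hx hmem => hna (Set.mem_biUnion hx hmem)⟩

lemma tendsto_cocompact_of_escape {u : ℕ → G} (K : CompactExhaustion G)
    (h : ∀ n, u n ∉ K n) : Tendsto u atTop (cocompact G) := by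
  rw [hasBasis_cocompact.tendsto_right_iff]
  intro C hC
  obtain ⟨m, hm⟩ := K.exists_superset_of_isCompact hC
  filter_upwards [eventually_ge_atTop m] with n hn
  exact fun hc => h n (K.subset hn (hm hc))

lemma not_isCompact_closure_of_escape {A : Set G} {u : ℕ → G} (hu : ∀ n, u n ∈ A)
    (h : Tendsto u atTop (cocompact G)) : ¬ IsCompact (closure A) := by
  intro hcpt
  obtain ⟨n, hn⟩ := (hasBasis_cocompact.tendsto_right_iff.1 h (closure A) hcpt).exists
  exact hn (subset_closure (hu n))

end Escape

section Basis
variable [SecondCountableTopology G]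

lemma exists_antitone_open_nhds (z : G) :
    ∃ V : ℕ → Set G, (∀ n, IsOpen (V n)) ∧ (∀ n, z ∈ V n) ∧
      (∀ ⦃m n : ℕ⦄, m ≤ n → V n ⊆ V m) ∧ ∀ U ∈ 𝓝 z, ∃ m, V m ⊆ U := by
  obtain ⟨B, hB⟩ := (𝓝 z).exists_antitone_basis
  refine ⟨fun n => interior (B n), fun n => isOpen_interior,
    fun n => mem_interior_iff_mem_nhds.2 (hB.1.mem_of_mem trivial), fun m n h => interior_mono (hB.2 h),
    fun U hU => ?_⟩
  obtain ⟨m, -, hm⟩ := hB.1.mem_iff.1 hU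
  exact ⟨m, interior_subset.trans hm⟩

end Basis

section Implications
variable {G : Type*} [TopologicalSpace G] [T2Space G] [LocallyCompactSpace G]
  [SecondCountableTopology G]
variable (Gd : TopGroupoid G) (z : G)

/-- Shorthand for statement (4). -/
def St4 : Prop := ∀ V : Set G, IsOpen V → z ∈ V →
  ¬ IsCompact (closure (Gd.r ⁻¹' (V ∩ Gd.units) ∩ Gd.s ⁻¹' {z}))

variable {Gd z}

lemma gd_mul_inv_mul_cancel {a b : G} (h : Gd.s a = Gd.s b) :
    Gd.mul (Gd.mul a (Gd.inv b)) b = a := by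
  rw [Gd.mul_assoc' a (Gd.inv b) b (by rw [Gd.r_inv, h]) (Gd.s_inv b), Gd.inv_mul', ← h,
    Gd.mul_unit]

/-- (4) → (2): from non-relative-compactness construct k-times convergence. -/
lemma st4_to_st2 (h4 : St4 Gd z) : ∀ k : ℕ, 1 ≤ k → Gd.ConvergesKTimes (fun _ => z) z k := by
  intro k _
  obtain ⟨V, hVo, hVz, hVanti, hVbasis⟩ := exists_antitone_open_nhds z
  set K := CompactExhaustion.choice G with hK
  have hA : ∀ n : ℕ, ¬ IsCompact (closure (Gd.r ⁻¹' (V n ∩ Gd.units) ∩ Gd.s ⁻¹' {z})) :=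
    fun n => h4 (V n) (hVo n) (hVz n)
  choose e he1 he2 using fun n => exists_greedy_seq Gd (hA n) (K.isCompact n)
  have hes : ∀ n m, Gd.s (e n m) = z := fun n m => (he1 n m).2
  have her : ∀ n m, Gd.r (e n m) ∈ V n := fun n m => ((he1 n m).1 : _).1
  refine ⟨fun i n => e n i.val, fun i n => hes n i.val, ?_, ?_⟩
  · intro i
    rw [Filter.tendsto_def]
    intro U hU
    obtain ⟨m, hm⟩ := hVbasis U hU
    rw [Filter.mem_atTop_sets]
    exact ⟨m, fun n hn => hm (hVanti hn (her n i.val))⟩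
  · intro i j hij
    rw [Filter.hasBasis_cocompact.tendsto_right_iff]
    intro C hC
    obtain ⟨m, hm⟩ := K.exists_superset_of_isCompact hC
    filter_upwards [Filter.eventually_ge_atTop m] with n hn hmem
    have hunK : Gd.mul (e n j.val) (Gd.inv (e n i.val)) ∈ K n :=
      K.subset hn (hm hmem)
    have hcomp : Gd.s (Gd.mul (e n j.val) (Gd.inv (e n i.val))) = Gd.r (e n i.val) := by
      rw [Gd.s_mul _ _ (by rw [Gd.r_inv, hes, hes]), Gd.s_inv]
    have : e n j.val ∈ Gd.setMul (K n) {e n i.val} := by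
      have := mem_setMul (Gd := Gd) hunK (Set.mem_singleton (e n i.val)) hcomp
      rwa [gd_mul_inv_mul_cancel ((hes n j.val).trans (hes n i.val).symm)] at this
    exact he2 n i.val j.val hij this

end Implications


section HaarLemmas
variable {G : Type*} [TopologicalSpace G] [T2Space G] [LocallyCompactSpace G]
  [MeasurableSpace G] [BorelSpace G]
variable {Gd : TopGroupoid G}

open TopGroupoid

lemma HaarSystem.integrable_lam (HS : HaarSystem Gd) (x : G) {f : G → ℝ}
    (hf : Continuous f) (hcs : HasCompactSupport f) : MeasureTheory.Integrable f (HS.lam x) := by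
  haveI := HS.regular x
  exact hf.integrable_of_hasCompactSupport hcs

lemma HaarSystem.integral_lam_pos (HS : HaarSystem Gd) {x : G} (hx : x ∈ Gd.units)
    {f : G → ℝ} (hf : Continuous f) (hcs : HasCompactSupport f) (hnn : 0 ≤ f)
    (hex : ∃ γ, Gd.r γ = x ∧ f γ ≠ 0) : 0 < ∫ γ, f γ ∂(HS.lam x) := by
  rw [integral_pos_iff_support_of_nonneg hnn (HS.integrable_lam x hf hcs)]
  obtain ⟨γ, hγr, hγf⟩ := hex
  exact HS.supp_full x hx (Function.support f) hf.isOpen_support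
    ⟨γ, hγf, by simpa [Set.mem_preimage] using hγr⟩

lemma HaarSystem.exists_of_integral_lam_pos (HS : HaarSystem Gd) {x : G} (hx : x ∈ Gd.units)
    {f : G → ℝ} (hf : Continuous f) (hcs : HasCompactSupport f) (hnn : 0 ≤ f)
    (hpos : 0 < ∫ γ, f γ ∂(HS.lam x)) : ∃ γ, f γ ≠ 0 ∧ Gd.r γ = x := by
  rw [integral_pos_iff_support_of_nonneg hnn (HS.integrable_lam x hf hcs)] at hpos
  by_contra hcon
  push_neg at hcon
  have hsub : Function.support f ⊆ {γ | Gd.r γ ≠ x} := by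
    intro γ hγ
    exact fun h => hcon γ hγ h
  have := measure_mono_null hsub (HS.supp_subset x hx)
  rw [this] at hpos
  exact lt_irrefl 0 hpos

lemma exists_urysohn (z : G) {U : Set G} (hU : IsOpen U) (hzU : z ∈ U) :
    ∃ f : G → ℝ, Continuous f ∧ HasCompactSupport f ∧ (∀ x, 0 ≤ f x ∧ f x ≤ 1) ∧
      f z = 1 ∧ tsupport f ⊆ U := by
  obtain ⟨K, hKcpt, hKint, hKU⟩ := exists_compact_subset hU hzU
  have hclcpt : IsCompact (closure (interior K)) :=
    hKcpt.of_isClosed_subset isClosed_closure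
      (closure_minimal interior_subset hKcpt.isClosed)
  obtain ⟨f, hfsupp, hfone, hfmem⟩ := exists_tsupport_one_of_isOpen_isClosed
    isOpen_interior hclcpt isClosed_singleton (Set.singleton_subset_iff.2 hKint)
  refine ⟨f, f.continuous, ?_, fun x => (hfmem x), hfone rfl, hfsupp.trans (interior_subset.trans hKU)⟩
  exact HasCompactSupport.of_support_subset_isCompact hKcpt
    ((subset_tsupport _).trans (hfsupp.trans interior_subset))

lemma HaarSystem.r_open_units (HS : HaarSystem Gd) {U : Set G} (hU : IsOpen U) {γ₀ : G}
    (hγ : γ₀ ∈ U) : ∃ N : Set G, IsOpen N ∧ Gd.r γ₀ ∈ N ∧ N ∩ Gd.units ⊆ Gd.r '' U := by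
  obtain ⟨f, hfc, hfcs, hf01, hf1, hfsupp⟩ := exists_urysohn γ₀ hU hγ
  have hnn : 0 ≤ f := fun x => (hf01 x).1
  refine ⟨(fun x => ∫ γ, f γ ∂(HS.lam x)) ⁻¹' Set.Ioi 0,
    isOpen_Ioi.preimage (HS.continuous_int f hfc hfcs), ?_, ?_⟩
  · exact HS.integral_lam_pos (r_mem_units γ₀) hfc hfcs hnn ⟨γ₀, rfl, by rw [hf1]; norm_num⟩
  · rintro x ⟨hxpos, hxu⟩
    obtain ⟨γ, hγf, hγr⟩ := HS.exists_of_integral_lam_pos hxu hfc hfcs hnn hxpos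
    exact ⟨γ, hfsupp (subset_tsupport f hγf), hγr⟩

lemma HaarSystem.s_open_units (HS : HaarSystem Gd) {U : Set G} (hU : IsOpen U) {γ₀ : G}
    (hγ : γ₀ ∈ U) : ∃ N : Set G, IsOpen N ∧ Gd.s γ₀ ∈ N ∧ N ∩ Gd.units ⊆ Gd.s '' U := by
  obtain ⟨N, hNo, hNm, hNsub⟩ := HS.r_open_units (hU.preimage Gd.continuous_inv)
    (show Gd.inv γ₀ ∈ Gd.inv ⁻¹' U by simp [Set.mem_preimage, Gd.inv_inv', hγ])
  rw [Gd.r_inv] at hNm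
  refine ⟨N, hNo, hNm, fun x hx => ?_⟩
  obtain ⟨δ, hδ, rfl⟩ := hNsub hx
  exact ⟨Gd.inv δ, hδ, Gd.s_inv δ⟩

lemma HaarSystem.closure_orbit_invariant (HS : HaarSystem Gd) {z x γ : G}
    (hx : x ∈ closure (Gd.orbit z)) (hγ : Gd.s γ = x) :
    Gd.r γ ∈ closure (Gd.orbit z) := by
  rw [mem_closure_iff]
  intro W hWo hWr
  obtain ⟨N, hNo, hNm, hNsub⟩ := HS.s_open_units (hU := hWo.preimage Gd.continuous_r)
    (γ₀ := γ) (Set.mem_preimage.2 hWr)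
  rw [hγ] at hNm
  obtain ⟨y, hyN, hyO⟩ := (mem_closure_iff.1 hx) N hNo hNm
  obtain ⟨η, hη, hηs⟩ := hNsub ⟨hyN, orbit_subset_units z hyO⟩
  obtain ⟨β, hβs, hβr⟩ := hyO
  have hcomp : Gd.s η = Gd.r β := by rw [hηs, hβr]
  refine ⟨Gd.r (Gd.mul η β), ?_, ⟨Gd.mul η β, ?_, rfl⟩⟩
  · rw [Gd.r_mul η β hcomp]; exact hη
  · simpa [Set.mem_preimage, Gd.s_mul η β hcomp] using hβs

end HaarLemmas


section LC
variable {G : Type*} [TopologicalSpace G] [T2Space G] [LocallyCompactSpace G]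
  [SecondCountableTopology G] [MeasurableSpace G] [BorelSpace G]
variable {Gd : TopGroupoid G}

open TopGroupoid

lemma isLocallyClosed_preimage_val_iff {O S : Set G} (hS : IsClosed S) (hO : O ⊆ S) :
    IsLocallyClosed ((Subtype.val : S → G) ⁻¹' O) ↔ IsLocallyClosed O := by
  constructor
  · rintro ⟨U', Z', hU', hZ', heq⟩
    obtain ⟨U, hUo, hUeq⟩ := isOpen_induced_iff.1 hU'
    obtain ⟨Z, hZc, hZeq⟩ := isClosed_induced_iff.1 hZ'
    refine ⟨U, Z ∩ S, hUo, hZc.inter hS, ?_⟩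
    ext x
    constructor
    · intro hx
      have hxS : x ∈ S := hO hx
      have : (⟨x, hxS⟩ : S) ∈ U' ∩ Z' := heq ▸ hx
      rw [← hUeq, ← hZeq] at this
      exact ⟨this.1, this.2, hxS⟩
    · rintro ⟨hxU, hxZ, hxS⟩
      have : (⟨x, hxS⟩ : S) ∈ U' ∩ Z' := by
        rw [← hUeq, ← hZeq]; exact ⟨hxU, hxZ⟩
      rw [← heq] at this
      exact this
  · rintro ⟨U, Z, hUo, hZc, heq⟩
    exact ⟨Subtype.val ⁻¹' U, Subtype.val ⁻¹' Z, hUo.preimage continuous_subtype_val,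
      hZc.preimage continuous_subtype_val, by rw [heq]; rfl⟩

lemma closure_orbit_subset_units (z : G) : closure (Gd.orbit z) ⊆ Gd.units :=
  closure_minimal (orbit_subset_units z) isClosed_units

set_option maxHeartbeats 1000000 in
/-- ¬(4) implies the orbit is locally closed (in `G`). -/
lemma isLocallyClosed_orbit_of_not_st4 (HS : HaarSystem Gd) {z : G} (hz : z ∈ Gd.units)
    (h : ¬ St4 Gd z) : IsLocallyClosed (Gd.orbit z) := by
  rw [St4] at h
  push_neg at h
  obtain ⟨V₀, hV₀o, hV₀z, hCcpt⟩ := h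
  set O := Gd.orbit z with hO
  -- claim 1 : V₀ ∩ closure O ⊆ O
  have claim1 : V₀ ∩ closure O ⊆ O := by
    rintro w ⟨hwV, hwcl⟩
    obtain ⟨o, hoO, holim⟩ := mem_closure_iff_seq_limit.1 hwcl
    choose β hβs hβr using hoO
    obtain ⟨N, hN⟩ := Filter.eventually_atTop.1 (holim.eventually (hV₀o.mem_nhds hwV))
    set δ : ℕ → G := fun n => β (n + N) with hδ
    have hδA : ∀ n, δ n ∈ Gd.r ⁻¹' (V₀ ∩ Gd.units) ∩ Gd.s ⁻¹' {z} := by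
      intro n
      refine ⟨?_, by simpa using hβs (n + N)⟩
      rw [Set.mem_preimage, hβr (n + N)]
      exact ⟨hN (n + N) (Nat.le_add_left N n), orbit_subset_units z (⟨β (n+N), by simpa using hβs (n+N), hβr (n+N)⟩)⟩
    have hseq := hCcpt.isSeqCompact (x := δ) (fun n => subset_closure (hδA n))
    obtain ⟨bb, hbbmem, φ, hφmono, hφlim⟩ := hseq
    have hsbb : Gd.s bb = z := by
      have h1 : Filter.Tendsto (fun n => Gd.s (δ (φ n))) Filter.atTop (𝓝 (Gd.s bb)) :=
        (Gd.continuous_s.tendsto bb).comp hφlim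
      have h2 : (fun n => Gd.s (δ (φ n))) = fun _ => z := by
        funext n; exact (hδA (φ n)).2
      rw [h2] at h1
      exact (tendsto_nhds_unique tendsto_const_nhds h1).symm
    have hrbb : Gd.r bb = w := by
      have h1 : Filter.Tendsto (fun n => Gd.r (δ (φ n))) Filter.atTop (𝓝 (Gd.r bb)) :=
        (Gd.continuous_r.tendsto bb).comp hφlim
      have h2 : Filter.Tendsto (fun n => Gd.r (δ (φ n))) Filter.atTop (𝓝 w) := by
        have : (fun n => Gd.r (δ (φ n))) = o ∘ (fun n => φ n + N) := by
          funext n; exact hβr (φ n + N)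
        rw [this]
        exact holim.comp ((Filter.tendsto_add_atTop_nat N).comp hφmono.tendsto_atTop)
      exact tendsto_nhds_unique h1 h2
    exact ⟨bb, by simpa using hsbb, hrbb⟩
  -- nbhds realizing openness of r onto units along the orbit
  have hNy : ∀ p : {y // y ∈ O}, ∃ N : Set G, IsOpen N ∧ (p : G) ∈ N ∧
      N ∩ Gd.units ⊆ Gd.r '' (Gd.s ⁻¹' V₀) := by
    rintro ⟨y, γ₀, hγ₀s, hγ₀r⟩
    have hγ₀mem : γ₀ ∈ Gd.s ⁻¹' V₀ := by
      rw [Set.mem_preimage]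
      simp only [Set.mem_preimage, Set.mem_singleton_iff] at hγ₀s
      rw [hγ₀s]; exact hV₀z
    obtain ⟨N, hNo, hNm, hNsub⟩ := HS.r_open_units (hV₀o.preimage Gd.continuous_s) hγ₀mem
    exact ⟨N, hNo, hγ₀r ▸ hNm, hNsub⟩
  choose N hNo hNm hNsub using hNy
  refine ⟨⋃ p, N p, closure O, isOpen_iUnion hNo, isClosed_closure, ?_⟩
  apply Set.Subset.antisymm
  · intro y hy
    exact ⟨Set.mem_iUnion.2 ⟨⟨y, hy⟩, hNm ⟨y, hy⟩⟩, subset_closure hy⟩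
  · rintro t ⟨htU, htcl⟩
    obtain ⟨p, hp⟩ := Set.mem_iUnion.1 htU
    have htunits : t ∈ Gd.units := closure_orbit_subset_units z htcl
    obtain ⟨η, hηV, hηr⟩ := hNsub p ⟨hp, htunits⟩
    have hsηcl : Gd.s η ∈ closure O := by
      have := HS.closure_orbit_invariant (z := z) (γ := Gd.inv η)
        (by rw [Gd.s_inv, hηr]; exact htcl) rfl
      rwa [Gd.r_inv] at this
    have hsηO : Gd.s η ∈ O := claim1 ⟨hηV, hsηcl⟩
    obtain ⟨β, hβs, hβr⟩ := hsηO
    have hcomp : Gd.s η = Gd.r β := hβr.symm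
    refine ⟨Gd.mul η β, ?_, by rw [Gd.r_mul η β hcomp, hηr]⟩
    simpa [Set.mem_preimage, Gd.s_mul η β hcomp] using hβs

lemma locallyCompactSpace_of_isLocallyClosed {O : Set G} (h : IsLocallyClosed O) :
    LocallyCompactSpace O := by
  obtain ⟨U, Z, hUo, hZc, rfl⟩ := h
  constructor
  rintro ⟨x, hxU, hxZ⟩ n hn
  obtain ⟨W, hW, hWsub⟩ := (mem_nhds_subtype _ _ _).1 hn
  obtain ⟨K, hKmem, hKsub, hKcpt⟩ := local_compact_nhds (show W ∩ U ∈ 𝓝 x from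
    Filter.inter_mem hW (hUo.mem_nhds hxU))
  refine ⟨Subtype.val ⁻¹' K, ?_, ?_, ?_⟩
  · exact (mem_nhds_subtype _ _ _).2 ⟨K, hKmem, subset_rfl⟩
  · exact fun p hp => hWsub (hKsub hp).1
  · rw [Subtype.isCompact_iff, Subtype.image_preimage_coe]
    have : (U ∩ Z) ∩ K = K ∩ Z := by
      apply Set.Subset.antisymm
      · rintro p ⟨⟨_, hpZ⟩, hpK⟩; exact ⟨hpK, hpZ⟩
      · rintro p ⟨hpK, hpZ⟩; exact ⟨⟨(hKsub hpK).2, hpZ⟩, hpK⟩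
    rw [this]
    exact hKcpt.inter_right hZc

lemma tendsto_of_mem_antitone_basis {z : G} {V : ℕ → Set G}
    (hVbasis : ∀ U ∈ 𝓝 z, ∃ m, V m ⊆ U) (hVanti : ∀ ⦃m n : ℕ⦄, m ≤ n → V n ⊆ V m)
    {u : ℕ → G} (hu : ∀ n, u n ∈ V n) : Filter.Tendsto u Filter.atTop (𝓝 z) := by
  rw [Filter.tendsto_def]
  intro U hU
  obtain ⟨m, hm⟩ := hVbasis U hU
  rw [Filter.mem_atTop_sets]
  exact ⟨m, fun n hn => hm (hVanti hn (hu n))⟩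

set_option maxHeartbeats 1000000 in
/-- (4) implies the orbit is not locally closed (in `G`). Uses principality and Baire. -/
lemma not_isLocallyClosed_orbit_of_st4 (HS : HaarSystem Gd) (hpr : Gd.Principal) {z : G}
    (hz : z ∈ Gd.units) (h4 : St4 Gd z) : ¬ IsLocallyClosed (Gd.orbit z) := by
  intro hLC
  haveI : Nonempty (Gd.orbit z) := ⟨⟨z, mem_orbit_self hz⟩⟩
  haveI := locallyCompactSpace_of_isLocallyClosed hLC
  set K := CompactExhaustion.choice G with hKdef
  have hFclosed : IsClosed (Gd.s ⁻¹' {z}) := isClosed_singleton.preimage Gd.continuous_s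
  set D : ℕ → Set (Gd.orbit z) :=
    fun n => (Subtype.val : Gd.orbit z → G) ⁻¹' (Gd.r '' (K n ∩ Gd.s ⁻¹' {z})) with hD
  have hDclosed : ∀ n, IsClosed (D n) :=
    fun n => (((K.isCompact n).inter_right hFclosed).image Gd.continuous_r).isClosed.preimage
      continuous_subtype_val
  have hDcover : ⋃ n, D n = Set.univ := by
    rw [Set.eq_univ_iff_forall]
    rintro ⟨x, β, hβs, hβr⟩
    obtain ⟨n, hn⟩ := K.exists_mem β
    exact Set.mem_iUnion.2 ⟨n, ⟨β, ⟨hn, hβs⟩, hβr⟩⟩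
  obtain ⟨m, p, hp⟩ := nonempty_interior_of_iUnion_of_closed hDclosed hDcover
  obtain ⟨W, hWo, hWeq⟩ := isOpen_induced_iff.1 (isOpen_interior (s := D m))
  have hpW : (p : G) ∈ W := by
    have : p ∈ (Subtype.val : Gd.orbit z → G) ⁻¹' W := by rw [hWeq]; exact hp
    exact this
  have hWsub : ∀ α, Gd.r α ∈ W → Gd.s α = z → α ∈ K m := by
    intro α hαW hαF
    have hrO : Gd.r α ∈ Gd.orbit z := ⟨α, hαF, rfl⟩
    have hmem : (⟨Gd.r α, hrO⟩ : Gd.orbit z) ∈ D m := by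
      have : (⟨Gd.r α, hrO⟩ : Gd.orbit z) ∈ (Subtype.val : Gd.orbit z → G) ⁻¹' W := hαW
      rw [hWeq] at this
      exact interior_subset this
    obtain ⟨κ, ⟨hκK, hκF⟩, hκr⟩ := hmem
    have hκα : κ = α := by
      apply hpr
      show (Gd.r κ, Gd.s κ) = (Gd.r α, Gd.s α)
      rw [Prod.mk.injEq]
      exact ⟨hκr, (show Gd.s κ = z from hκF).trans hαF.symm⟩
    rwa [← hκα]
  obtain ⟨γ₀, hγ₀s, hγ₀r⟩ := p.2
  have hγ₀z : Gd.s γ₀ = z := hγ₀s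
  obtain ⟨V, hVo, hVz, hVanti, hVbasis⟩ := exists_antitone_open_nhds z
  have hA : ∀ n : ℕ, ∃ a, a ∈ Gd.r ⁻¹' (V n ∩ Gd.units) ∩ Gd.s ⁻¹' {z} ∧ a ∉ K n := by
    intro n
    obtain ⟨a, h1, h2⟩ := exists_mem_notMem_compact (h4 (V n) (hVo n) (hVz n)) (K.isCompact n)
    exact ⟨a, h1, h2⟩
  choose γ hγA hγK using hA
  have hγcc : Filter.Tendsto γ Filter.atTop (Filter.cocompact G) :=
    tendsto_cocompact_of_escape K hγK
  have hγr : Filter.Tendsto (fun n => Gd.r (γ n)) Filter.atTop (𝓝 z) :=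
    tendsto_of_mem_antitone_basis hVbasis hVanti (fun n => ((hγA n).1).1)
  obtain ⟨Q, hQcpt, hQint, -⟩ := exists_compact_subset isOpen_univ (Set.mem_univ γ₀)
  obtain ⟨B, hBo, hBγ₀, hBanti, hBbasis⟩ := exists_antitone_open_nhds γ₀
  have hNm : ∀ mm : ℕ, ∃ N : Set G, IsOpen N ∧ z ∈ N ∧
      N ∩ Gd.units ⊆ Gd.s '' (B mm ∩ interior Q) := by
    intro mm
    obtain ⟨N, h1, h2, h3⟩ := HS.s_open_units ((hBo mm).inter isOpen_interior)
      (Set.mem_inter (hBγ₀ mm) hQint)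
    rw [hγ₀z] at h2
    exact ⟨N, h1, h2, h3⟩
  choose Nb hNbo hNbz hNbsub using hNm
  have hev : ∀ mm : ℕ, ∀ᶠ n in Filter.atTop, Gd.r (γ n) ∈ Nb mm :=
    fun mm => hγr.eventually_mem ((hNbo mm).mem_nhds (hNbz mm))
  obtain ⟨φ, hφmono, hφmem⟩ := Filter.extraction_forall_of_eventually hev
  have hη : ∀ mm, ∃ η, (η ∈ B mm ∧ η ∈ interior Q) ∧ Gd.s η = Gd.r (γ (φ mm)) := by
    intro mm
    obtain ⟨η, hη1, hη2⟩ := hNbsub mm ⟨hφmem mm, r_mem_units _⟩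
    exact ⟨η, hη1, hη2⟩
  choose η hηmem hηs using hη
  have hεs : ∀ mm, Gd.s (Gd.mul (η mm) (γ (φ mm))) = z := by
    intro mm
    rw [Gd.s_mul _ _ (hηs mm)]
    exact (hγA (φ mm)).2
  have hεr : ∀ mm, Gd.r (Gd.mul (η mm) (γ (φ mm))) = Gd.r (η mm) :=
    fun mm => Gd.r_mul _ _ (hηs mm)
  have hηlim : Filter.Tendsto η Filter.atTop (𝓝 γ₀) :=
    tendsto_of_mem_antitone_basis hBbasis hBanti (fun mm => (hηmem mm).1)
  have hrεlim : Filter.Tendsto (fun mm => Gd.r (Gd.mul (η mm) (γ (φ mm)))) Filter.atTop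
      (𝓝 (p : G)) := by
    have h1 : Filter.Tendsto (fun mm => Gd.r (η mm)) Filter.atTop (𝓝 (Gd.r γ₀)) :=
      (Gd.continuous_r.tendsto γ₀).comp hηlim
    rw [hγ₀r] at h1
    have : (fun mm => Gd.r (Gd.mul (η mm) (γ (φ mm)))) = fun mm => Gd.r (η mm) :=
      funext hεr
    rw [this]
    exact h1
  have hevW : ∀ᶠ mm in Filter.atTop, Gd.r (Gd.mul (η mm) (γ (φ mm))) ∈ W :=
    hrεlim.eventually_mem (hWo.mem_nhds hpW)
  have hεK : ∀ᶠ mm in Filter.atTop, Gd.mul (η mm) (γ (φ mm)) ∈ K m :=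
    hevW.mono fun mm h => hWsub _ h (hεs mm)
  have hC' : IsCompact (Gd.setMul (Gd.inv '' Q) (K m)) :=
    isCompact_setMul (isCompact_inv_image hQcpt) (K.isCompact m)
  have hcc2 : Filter.Tendsto (fun mm => γ (φ mm)) Filter.atTop (Filter.cocompact G) :=
    hγcc.comp hφmono.tendsto_atTop
  have hevnot := Filter.hasBasis_cocompact.tendsto_right_iff.1 hcc2 _ hC'
  obtain ⟨mm, h1, h2⟩ := (hεK.and hevnot).exists
  apply h2
  have heq : Gd.mul (Gd.inv (η mm)) (Gd.mul (η mm) (γ (φ mm))) = γ (φ mm) :=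
    inv_mul_cancel_left (hηs mm)
  rw [← heq]
  exact mem_setMul ⟨η mm, interior_subset (hηmem mm).2, rfl⟩ h1
    (by rw [Gd.s_inv, hεr mm])

end LC


section MeasureParts
variable {G : Type*} [TopologicalSpace G] [T2Space G] [LocallyCompactSpace G]
  [SecondCountableTopology G] [MeasurableSpace G] [BorelSpace G]
variable {Gd : TopGroupoid G}

open TopGroupoid

lemma rlam_apply (HS : HaarSystem Gd) (x : G) {E : Set G} (hE : MeasurableSet E) :
    HS.rlam x E = HS.lam x (Gd.inv ⁻¹' E) := by
  rw [HaarSystem.rlam, MeasureTheory.Measure.map_apply Gd.continuous_inv.measurable hE]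

/-- (3) → (4). -/
lemma st3_to_st4 (HS : HaarSystem Gd) {z : G} (hz : z ∈ Gd.units)
    (h3 : ∀ V : Set G, IsOpen V → z ∈ V → HS.rlam z (Gd.r ⁻¹' (V ∩ Gd.units)) = ⊤) :
    St4 Gd z := by
  intro V hVo hVz hcpt
  haveI := HS.regular z
  apply absurd (h3 V hVo hVz)
  have hsub : Gd.r ⁻¹' (V ∩ Gd.units) ⊆
      closure (Gd.r ⁻¹' (V ∩ Gd.units) ∩ Gd.s ⁻¹' {z}) ∪ {γ | Gd.s γ ≠ z} := by
    intro α hα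
    by_cases hs : Gd.s α = z
    · exact Or.inl (subset_closure ⟨hα, hs⟩)
    · exact Or.inr hs
  have h1 : HS.rlam z (closure (Gd.r ⁻¹' (V ∩ Gd.units) ∩ Gd.s ⁻¹' {z})) < ⊤ := by
    rw [rlam_apply HS z hcpt.isClosed.measurableSet]
    have hpre : Gd.inv ⁻¹' (closure (Gd.r ⁻¹' (V ∩ Gd.units) ∩ Gd.s ⁻¹' {z})) =
        Gd.inv '' (closure (Gd.r ⁻¹' (V ∩ Gd.units) ∩ Gd.s ⁻¹' {z})) := by
      apply Set.Subset.antisymm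
      · intro α hα; exact ⟨Gd.inv α, hα, Gd.inv_inv' α⟩
      · rintro α ⟨β, hβ, rfl⟩; rwa [Set.mem_preimage, Gd.inv_inv']
    rw [hpre]
    exact (hcpt.image Gd.continuous_inv).measure_lt_top
  have h2 : HS.rlam z {γ | Gd.s γ ≠ z} = 0 := by
    have hmeas : MeasurableSet {γ | Gd.s γ ≠ z} :=
      ((isClosed_eq Gd.continuous_s continuous_const).measurableSet).compl
    rw [rlam_apply HS z hmeas]
    have : Gd.inv ⁻¹' {γ | Gd.s γ ≠ z} = {γ | Gd.r γ ≠ z} := by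
      ext α; simp [Set.mem_preimage, Gd.s_inv]
    rw [this]
    exact HS.supp_subset z hz
  have := (measure_mono hsub).trans_lt
    (((measure_union_le _ _).trans_lt (by rw [h2, add_zero]; exact h1)))
  exact this.ne

lemma gd_key_rewrite {a b α : G} (hsa : Gd.s a = Gd.r α) (hsb : Gd.s b = Gd.r α) :
    Gd.mul (Gd.mul b α) (Gd.inv (Gd.mul a α)) = Gd.mul b (Gd.inv a) := by
  rw [inv_mul_rev hsa]
  rw [Gd.mul_assoc' b α _ hsb
    (by rw [Gd.r_mul _ _ (by rw [Gd.s_inv, Gd.r_inv, hsa]), Gd.r_inv])]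
  congr 1
  rw [← Gd.mul_assoc' α (Gd.inv α) (Gd.inv a) (Gd.r_inv α).symm
    (by rw [Gd.s_inv, Gd.r_inv, hsa]), Gd.mul_inv', ← hsa, ← Gd.r_inv a, Gd.unit_mul]

/-- (2) → (3). -/
lemma st2_to_st3 (HS : HaarSystem Gd) {z : G} (hz : z ∈ Gd.units)
    (h2 : ∀ k : ℕ, 1 ≤ k → Gd.ConvergesKTimes (fun _ => z) z k) :
    ∀ V : Set G, IsOpen V → z ∈ V → HS.rlam z (Gd.r ⁻¹' (V ∩ Gd.units)) = ⊤ := by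
  intro V hVo hVz
  haveI := HS.regular z
  -- Urysohn function supported in s⁻¹(V)
  have hzV : z ∈ Gd.s ⁻¹' V := by rw [Set.mem_preimage, unit_s hz]; exact hVz
  obtain ⟨f, hfc, hfcs, hf01, hf1, hfsupp⟩ :=
    exists_urysohn z (hVo.preimage Gd.continuous_s) hzV
  have hnn : 0 ≤ f := fun x => (hf01 x).1
  set c₀ : ℝ := ∫ γ, f γ ∂(HS.lam z) with hc₀
  have hc₀pos : 0 < c₀ :=
    HS.integral_lam_pos hz hfc hfcs hnn ⟨z, unit_r hz, by rw [hf1]; norm_num⟩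
  set c : ℝ≥0∞ := ENNReal.ofReal (c₀ / 2) with hc
  have hcpos : c ≠ 0 := by
    rw [hc, ← ENNReal.ofReal_zero, Ne, ENNReal.ofReal_eq_ofReal_iff (by positivity) le_rfl]
    positivity
  have hcne : c ≠ ⊤ := ENNReal.ofReal_ne_top
  set Vc : Set G := (fun x => ∫ γ, f γ ∂(HS.lam x)) ⁻¹' Set.Ioi (c₀ / 2) with hVc
  have hVco : IsOpen Vc := isOpen_Ioi.preimage (HS.continuous_int f hfc hfcs)
  have hVcz : z ∈ Vc := by
    rw [hVc, Set.mem_preimage, Set.mem_Ioi, ← hc₀]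
    linarith
  set Kf : Set G := tsupport f with hKf
  have hKfcpt : IsCompact Kf := hfcs
  set Q : Set G := Gd.setMul Kf (Gd.inv '' Kf) with hQ
  have hQcpt : IsCompact Q := isCompact_setMul hKfcpt (isCompact_inv_image hKfcpt)
  -- main step: for every k ≥ 1 the measure is at least k * c
  have hmain : ∀ k : ℕ, 1 ≤ k → (k : ℝ≥0∞) * c ≤ HS.rlam z (Gd.r ⁻¹' (V ∩ Gd.units)) := by
    intro k hk
    obtain ⟨γ, hγs, hγr, hγcc⟩ := h2 k hk
    -- choose a single good index n₀
    have hev1 : ∀ᶠ n in Filter.atTop, ∀ i : Fin k, Gd.r (γ i n) ∈ Vc :=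
      Filter.eventually_all.2 fun i => (hγr i).eventually_mem (hVco.mem_nhds hVcz)
    have hev2 : ∀ᶠ n in Filter.atTop, ∀ i j : Fin k, i < j →
        Gd.mul (γ j n) (Gd.inv (γ i n)) ∉ Q := by
      rw [Filter.eventually_all]
      intro i
      rw [Filter.eventually_all]
      intro j
      by_cases hij : i < j
      · have := Filter.hasBasis_cocompact.tendsto_right_iff.1 (hγcc i j hij) Q hQcpt
        exact this.mono fun n hn _ => hn
      · exact Filter.Eventually.of_forall fun n h => absurd h hij
    obtain ⟨n₀, hn₀1, hn₀2⟩ := (hev1.and hev2).exists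
    set δ : Fin k → G := fun i => γ i n₀ with hδ
    have hδs : ∀ i, Gd.s (δ i) = z := fun i => hγs i n₀
    -- the translated sets
    set S : Fin k → Set G := fun i => {α | Gd.r α = z ∧ Gd.mul (δ i) α ∈ Kf} with hS
    have hSclosed : ∀ i, IsClosed (S i) := by
      intro i
      have hcl : IsClosed {α : G | Gd.r α = z} := isClosed_eq Gd.continuous_r continuous_const
      have hmap : Set.MapsTo (fun α => ((δ i, α) : G × G)) {α : G | Gd.r α = z}
          {p : G × G | Gd.s p.1 = Gd.r p.2} := by
        intro α hα
        simp only [Set.mem_setOf_eq] at hα ⊢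
        rw [hδs i, hα]
      have hco : ContinuousOn (fun α => Gd.mul (δ i) α) {α : G | Gd.r α = z} :=
        Gd.continuous_mul.comp (continuous_const.prodMk continuous_id).continuousOn hmap
      have : S i = {α : G | Gd.r α = z} ∩ (fun α => Gd.mul (δ i) α) ⁻¹' Kf := by
        ext α; simp [hS, Set.mem_setOf_eq, Set.mem_preimage]
      rw [this]
      exact hco.preimage_isClosed_of_isClosed hcl hKfcpt.isClosed
    -- lower bound on the measure of S i
    have hlow : ∀ i, c ≤ HS.lam z (S i) := by
      intro i
      by_cases htop : HS.lam z (S i) = ⊤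
      · rw [htop]; exact le_top
      have hinv := HS.left_invariant (δ i) f hfc hfcs
      rw [hδs i] at hinv
      have hrhs : c₀ / 2 < ∫ α, f α ∂(HS.lam (Gd.r (δ i))) := hn₀1 i
      have hae : ∀ᵐ α ∂(HS.lam z), Gd.r α = z := by
        rw [MeasureTheory.ae_iff]
        exact HS.supp_subset z hz
      have hbound : (fun α => f (Gd.mul (δ i) α)) ≤ᵐ[HS.lam z]
          (S i).indicator (fun _ => (1 : ℝ)) := by
        refine hae.mono fun α hα => ?_
        by_cases hmem : α ∈ S i
        · rw [Set.indicator_of_mem hmem]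
          exact (hf01 _).2
        · rw [Set.indicator_of_notMem hmem]
          have hnKf : Gd.mul (δ i) α ∉ Kf := fun hK => hmem ⟨hα, hK⟩
          have h0 : f (Gd.mul (δ i) α) = 0 := image_eq_zero_of_notMem_tsupport hnKf
          exact le_of_eq h0
      have hind : MeasureTheory.Integrable ((S i).indicator (fun _ => (1 : ℝ))) (HS.lam z) := by
        rw [MeasureTheory.integrable_indicator_iff (hSclosed i).measurableSet]
        exact MeasureTheory.integrableOn_const htop
      have hmono := MeasureTheory.integral_mono_of_nonneg
        (f := fun α => f (Gd.mul (δ i) α)) (μ := HS.lam z)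
        (Filter.Eventually.of_forall fun α => hnn (Gd.mul (δ i) α)) hind hbound
      rw [hinv] at hmono
      have hindval : ∫ α, (S i).indicator (fun _ => (1 : ℝ)) α ∂(HS.lam z) =
          (HS.lam z (S i)).toReal := by
        rw [MeasureTheory.integral_indicator_const (1 : ℝ) (hSclosed i).measurableSet]
        simp
        rfl
      rw [hindval] at hmono
      have : c₀ / 2 ≤ (HS.lam z (S i)).toReal := le_trans (le_of_lt hrhs) hmono
      rw [hc]
      calc ENNReal.ofReal (c₀ / 2) ≤ ENNReal.ofReal (HS.lam z (S i)).toReal :=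
            ENNReal.ofReal_le_ofReal this
        _ = HS.lam z (S i) := ENNReal.ofReal_toReal htop
    -- disjointness
    have hSdisj : Pairwise (Function.onFun Disjoint S) := by
      intro i j hij
      rw [Function.onFun, Set.disjoint_left]
      rintro α ⟨hαr, hαi⟩ ⟨-, hαj⟩
      rcases hij.lt_or_gt with hlt | hlt
      · apply hn₀2 i j hlt
        have := gd_key_rewrite (a := δ i) (b := δ j) (α := α)
          (by rw [hδs, hαr]) (by rw [hδs, hαr])
        rw [← this]
        exact mem_setMul hαj ⟨Gd.mul (δ i) α, hαi, rfl⟩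
          (by rw [Gd.s_mul _ _ (by rw [hδs, hαr]), Gd.r_inv, Gd.s_mul _ _ (by rw [hδs, hαr])])
      · apply hn₀2 j i hlt
        have := gd_key_rewrite (a := δ j) (b := δ i) (α := α)
          (by rw [hδs, hαr]) (by rw [hδs, hαr])
        rw [← this]
        exact mem_setMul hαi ⟨Gd.mul (δ j) α, hαj, rfl⟩
          (by rw [Gd.s_mul _ _ (by rw [hδs, hαr]), Gd.r_inv, Gd.s_mul _ _ (by rw [hδs, hαr])])
    -- transport through inversion
    set T : Fin k → Set G := fun i => Gd.inv ⁻¹' (S i) with hT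
    have hTmeas : ∀ i, MeasurableSet (T i) :=
      fun i => (hSclosed i).measurableSet.preimage Gd.continuous_inv.measurable
    have hTdisj : Pairwise (Function.onFun Disjoint T) :=
      fun i j hij => Set.disjoint_left.2 fun α hαi hαj =>
        Set.disjoint_left.1 (hSdisj hij) hαi hαj
    have hTsub : ∀ i, T i ⊆ Gd.r ⁻¹' (V ∩ Gd.units) := by
      intro i α hα
      obtain ⟨hαr, hαK⟩ := hα
      refine ⟨?_, r_mem_units α⟩
      have hcomp : Gd.s (δ i) = Gd.r (Gd.inv α) := by rw [hδs, Gd.r_inv, ← hαr, Gd.r_inv]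
      have : Gd.s (Gd.mul (δ i) (Gd.inv α)) ∈ V := by
        have := hfsupp hαK
        rwa [Set.mem_preimage] at this
      rwa [Gd.s_mul _ _ hcomp, Gd.s_inv] at this
    have hTval : ∀ i, HS.rlam z (T i) = HS.lam z (S i) := by
      intro i
      rw [rlam_apply HS z (hTmeas i)]
      congr 1
      ext α
      simp [hT, Set.mem_preimage, Gd.inv_inv']
    have hUnion : HS.rlam z (⋃ i, T i) = ∑' i, HS.rlam z (T i) :=
      MeasureTheory.measure_iUnion hTdisj hTmeas
    calc (k : ℝ≥0∞) * c = ∑' _ : Fin k, c := by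
          rw [tsum_fintype]
          simp [Finset.sum_const, Finset.card_univ, nsmul_eq_mul]
      _ ≤ ∑' i : Fin k, HS.rlam z (T i) := by
          apply Summable.tsum_le_tsum _ ENNReal.summable ENNReal.summable
          intro i
          rw [hTval i]
          exact hlow i
      _ = HS.rlam z (⋃ i, T i) := hUnion.symm
      _ ≤ HS.rlam z (Gd.r ⁻¹' (V ∩ Gd.units)) :=
          measure_mono (Set.iUnion_subset hTsub)
  -- conclude
  by_contra hne
  have hlt : HS.rlam z (Gd.r ⁻¹' (V ∩ Gd.units)) / c < ⊤ := ENNReal.div_lt_top hne hcpos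
  obtain ⟨n, hn⟩ := ENNReal.exists_nat_gt hlt.ne
  have h1 : HS.rlam z (Gd.r ⁻¹' (V ∩ Gd.units)) < ((n : ℝ≥0∞) + 1) * c := by
    rw [← ENNReal.div_lt_iff (Or.inl hcpos) (Or.inl hcne)]
    exact hn.trans_le (by exact_mod_cast le_of_lt (Nat.lt_succ_self n))
  have h2 := hmain (n + 1) (Nat.le_add_left 1 n)
  rw [Nat.cast_add, Nat.cast_one] at h2
  exact absurd (h2.trans_lt h1) (lt_irrefl _)

end MeasureParts

end AuxLemmas

/-- equivalence of (1) `[z]` not locally closed, (2) the constant sequence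
converges `k`-times to `z` for all `k ≥ 1`, (3) `λ_z(r⁻¹ V) = ∞` for all open neighborhoods
`V` of `z` in `G⁰`, (4) `r⁻¹(V) ∩ s⁻¹{z}` is not relatively compact for all such `V`. -/
theorem stmt10 {G : Type*} [TopologicalSpace G] [T2Space G] [LocallyCompactSpace G]
    [SecondCountableTopology G] [MeasurableSpace G] [BorelSpace G]
    (Gd : TopGroupoid G) (HS : HaarSystem Gd) (hpr : Gd.Principal)
    (z : G) (hz : z ∈ Gd.units) :
    ((¬ IsLocallyClosed (Subtype.val ⁻¹' Gd.orbit z : Set Gd.units)) ↔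
      (∀ k : ℕ, 1 ≤ k → Gd.ConvergesKTimes (fun _ => z) z k)) ∧
    ((∀ k : ℕ, 1 ≤ k → Gd.ConvergesKTimes (fun _ => z) z k) ↔
      (∀ V : Set G, IsOpen V → z ∈ V →
        HS.rlam z (Gd.r ⁻¹' (V ∩ Gd.units)) = ⊤)) ∧
    ((∀ V : Set G, IsOpen V → z ∈ V →
        HS.rlam z (Gd.r ⁻¹' (V ∩ Gd.units)) = ⊤) ↔
      (∀ V : Set G, IsOpen V → z ∈ V →
        ¬ IsCompact (closure (Gd.r ⁻¹' (V ∩ Gd.units) ∩ Gd.s ⁻¹' {z})))) := by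
  have hLCiff : IsLocallyClosed (Subtype.val ⁻¹' Gd.orbit z : Set Gd.units) ↔
      IsLocallyClosed (Gd.orbit z) :=
    isLocallyClosed_preimage_val_iff TopGroupoid.isClosed_units
      (TopGroupoid.orbit_subset_units z)
  have hA : ¬ IsLocallyClosed (Gd.orbit z) → St4 Gd z := by
    intro h
    by_contra h4
    exact h (isLocallyClosed_orbit_of_not_st4 HS hz h4)
  have hE : St4 Gd z → ¬ IsLocallyClosed (Gd.orbit z) :=
    not_isLocallyClosed_orbit_of_st4 HS hpr hz
  have hB : St4 Gd z → ∀ k : ℕ, 1 ≤ k → Gd.ConvergesKTimes (fun _ => z) z k := st4_to_st2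
  have hC := st2_to_st3 HS hz
  have hD := st3_to_st4 HS hz
  refine ⟨⟨fun h1 => hB (hA (fun h => h1 (hLCiff.2 h))), fun h2 h1 => ?_⟩,
    ⟨fun h2 => hC h2, fun h3 => hB (hD h3)⟩,
    ⟨fun h3 => ?_, fun h4 => hC (hB h4)⟩⟩
  · exact hE (hD (hC h2)) (hLCiff.1 h1)
  · exact hD h3
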